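/- arXiv:1106.1255 — 5 statements merged into one kernel-verified Lean document; each statement's English description precedes it below -/
import Mathlib

section
/- For every graph G, κ(G × K₂) ≤ 2κ(G), where κ denotes the vertex connectivity. -/
open SimpleGraph

universe u v

def SimpleGraph.tensor {V : Type u} {W : Type v} (G : SimpleGraph V) (H : SimpleGraph W) :
    SimpleGraph (V × W) where
  Adj p q := G.Adj p.1 q.1 ∧ H.Adj p.2 q.2
  symm := ⟨fun _ _ h => ⟨h.1.symm, h.2.symm⟩⟩
  loopless := ⟨fun _ h => G.loopless.irrefl _ h.1⟩

def timesK2 {V : Type u} (G : SimpleGraph V) : SimpleGraph (V × Bool) :=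
  G.tensor ⊤

def IsComp {α : Type u} (H : SimpleGraph α) (C : Set α) : Prop :=
  ∃ K : H.ConnectedComponent, C = K.supp

def IsCompOf {V : Type u} (G : SimpleGraph V) (s C : Set V) : Prop :=
  ∃ K : (G.induce s).ConnectedComponent, C = Subtype.val '' K.supp

def IsBPair {V : Type u} (G : SimpleGraph V) (X Y : Set V) : Prop :=
  Disjoint X Y ∧ ((X ∪ Y)ᶜ : Set V).Nonempty ∧
    ∃ C : Set V, IsCompOf G ((X ∪ Y)ᶜ) C ∧ (G.induce C).Colorable 2 ∧
      ∀ x ∈ X, (G.induce (C ∪ {x})).Colorable 2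

noncomputable def bInv {V : Type u} (G : SimpleGraph V) : ℕ :=
  sInf {n | ∃ X Y : Set V, IsBPair G X Y ∧ n = X.ncard + 2 * Y.ncard}

def IsSeparating {V : Type u} (G : SimpleGraph V) (S : Set V) : Prop :=
  ¬ (G.induce Sᶜ).Connected ∨ (Sᶜ : Set V).Subsingleton

noncomputable def kappa {V : Type u} (G : SimpleGraph V) : ℕ :=
  sInf {n | ∃ S : Set V, IsSeparating G S ∧ n = S.ncard}

def starGraph {V : Type u} (G : SimpleGraph V) (S : Set (V × Bool)) : SimpleGraph V where
  Adj u v := u ≠ v ∧ ∃ x y : Bool, (u, x) ∉ S ∧ (v, y) ∉ S ∧ (timesK2 G).Adj (u, x) (v, y)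
  symm := ⟨by
    rintro u v ⟨h, x, y, hx, hy, hadj⟩
    exact ⟨h.symm, y, x, hy, hx, hadj.symm⟩⟩
  loopless := ⟨fun u h => h.1 rfl⟩

lemma lift_sep {V : Type u} (G : SimpleGraph V) (S : Set V) (hS : IsSeparating G S) :
    IsSeparating (timesK2 G) (Prod.fst ⁻¹' S) := by
  left
  intro hcon
  have hc : ((Prod.fst ⁻¹' S : Set (V × Bool)))ᶜ = Prod.fst ⁻¹' Sᶜ := rfl
  rw [hc] at hcon
  -- projection hom
  let f : ((timesK2 G).induce (Prod.fst ⁻¹' Sᶜ)) →g (G.induce Sᶜ) :=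
    { toFun := fun p => ⟨p.1.1, p.2⟩
      map_rel' := by
        rintro ⟨⟨a, x⟩, ha⟩ ⟨⟨b, y⟩, hb⟩ hadj
        exact And.left hadj }
  have hsurj : Function.Surjective f := by
    rintro ⟨u, hu⟩
    exact ⟨⟨(u, false), hu⟩, rfl⟩
  have := hcon.map f hsurj
  cases hS with
  | inl h => exact h this
  | inr h =>
    -- Sᶜ subsingleton; if empty then product side empty contradicting connected nonempty;
    -- else Sᶜ = {u}: (u,false) and (u,true) not reachable
    obtain ⟨⟨⟨u, x⟩, hu⟩⟩ := hcon.nonempty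
    have hu' : u ∈ Sᶜ := hu
    have hreach := hcon.preconnected ⟨(u, false), hu'⟩ ⟨(u, true), hu'⟩
    obtain ⟨w⟩ := hreach
    cases w with
    | @cons _ b _ hadj _ =>
      have hG : G.Adj u b.1.1 := And.left hadj
      have hb : b.1.1 = u := h b.2 hu'
      rw [hb] at hG
      exact G.loopless.irrefl u hG

/-- For every graph `G`, `κ(G × K₂) ≤ 2κ(G)`. -/
theorem stmt_8 {V : Type u} [Fintype V] (G : SimpleGraph V) :
    kappa (timesK2 G) ≤ 2 * kappa G := by
  have hne : {n | ∃ S : Set V, IsSeparating G S ∧ n = S.ncard}.Nonempty := by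
    refine ⟨(Set.univ : Set V).ncard, Set.univ, Or.inr ?_, rfl⟩
    simp [Set.Subsingleton]
  obtain ⟨S, hSsep, hScard⟩ := Nat.sInf_mem hne
  have key : kappa (timesK2 G) ≤ (Prod.fst ⁻¹' S : Set (V × Bool)).ncard :=
    Nat.sInf_le ⟨_, lift_sep G S hSsep, rfl⟩
  have hcard : (Prod.fst ⁻¹' S : Set (V × Bool)).ncard = 2 * S.ncard := by
    have : (Prod.fst ⁻¹' S : Set (V × Bool)) = S ×ˢ (Set.univ : Set Bool) := by
      ext ⟨a, b⟩; simp
    rw [this, ← Nat.card_coe_set_eq, Nat.card_congr (Equiv.Set.prod _ _), Nat.card_prod,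
      Nat.card_coe_set_eq, Nat.card_coe_set_eq, Set.ncard_univ]
    simp [Nat.mul_comm, Nat.card_eq_fintype_card]
  rw [hcard] at key
  rw [show kappa G = S.ncard from hScard]
  exact key
end

section
/- For every graph G admitting a b-pair, κ(G × K₂) ≤ b(G). -/
open SimpleGraph

universe u v

private lemma walk_ind {α : Type u} {H : SimpleGraph α} (P : α → Prop)
    (hP : ∀ {a b}, H.Adj a b → P a → P b) :
    ∀ {x y : α}, H.Walk x y → P x → P y := by
  intro x y p
  induction p with
  | nil => exact id
  | cons h p ih => exact fun hx => ih (hP h hx)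

private lemma parity_lemma {V : Type u} {G : SimpleGraph V} (s : Set V) (f : V → Bool)
    (hf : ∀ a b, a ∈ s → b ∈ s → G.Adj a b → f a ≠ f b) :
    ∀ {x y : V} (p : G.Walk x y), (∀ w ∈ p.support, w ∈ s) →
      (f x = f y ↔ Even p.length) := by
  intro x y p
  induction p with
  | nil => intro _; simp
  | @cons a b c h p ih =>
      intro hs
      have hb : b ∈ s := hs b (by simp [Walk.support_cons])
      have ha : a ∈ s := hs a (by simp)
      have h1 : f a ≠ f b := hf a b ha hb h
      have h2 : f b = f c ↔ Even p.length := ih (fun w hw => hs w (by simp [Walk.support_cons, hw]))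
      simp only [Walk.length_cons, Nat.even_add_one, ← h2]
      cases hfa : f a <;> cases hfb : f b <;> cases hfc : f c <;> simp_all

private lemma lift_walk {V : Type u} {G : SimpleGraph V} {s : Set V} :
    ∀ {x y : s} (_ : (G.induce s).Walk x y), ∃ p : G.Walk x.val y.val,
      ∀ w ∈ p.support, ∃ w' : s, w'.val = w ∧ (G.induce s).Reachable w' y := by
  intro x y q
  induction q with
  | @nil a => exact ⟨Walk.nil, by rintro w hw; simp at hw; exact ⟨a, hw ▸ rfl, Reachable.refl _⟩⟩
  | @cons a b c h q ih =>
      obtain ⟨p, hp⟩ := ih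
      refine ⟨Walk.cons (by exact h) p, ?_⟩
      intro w hw
      rcases List.mem_cons.mp (show w ∈ (a : V) :: p.support from hw) with hw | hw
      · exact ⟨a, hw ▸ rfl, ⟨Walk.cons h q⟩⟩
      · exact hp w hw

private lemma proper_of_coloring {V : Type u} {G : SimpleGraph V} {s : Set V}
    (col : (G.induce s).Coloring (Fin 2)) (f : V → Bool)
    (hf : ∀ w (h : w ∈ s), f w = decide (col ⟨w, h⟩ = 1)) :
    ∀ a b, a ∈ s → b ∈ s → G.Adj a b → f a ≠ f b := by
  intro a b ha hb hadj
  have : (G.induce s).Adj ⟨a, ha⟩ ⟨b, hb⟩ := by exact hadj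
  have hne := col.valid this
  rw [hf a ha, hf b hb]
  revert hne
  generalize col ⟨a, ha⟩ = i; generalize col ⟨b, hb⟩ = j
  revert i j; decide

/-- For every graph `G` admitting a b-pair, `κ(G × K₂) ≤ b(G)`. -/
theorem stmt_9 {V : Type u} [Fintype V] (G : SimpleGraph V)
    (h : ∃ X Y : Set V, IsBPair G X Y) :
    kappa (timesK2 G) ≤ bInv G := by
  classical
  have hne : {n | ∃ X Y : Set V, IsBPair G X Y ∧ n = X.ncard + 2 * Y.ncard}.Nonempty := by
    obtain ⟨X, Y, hXY⟩ := h
    exact ⟨X.ncard + 2 * Y.ncard, X, Y, hXY, rfl⟩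
  obtain ⟨X, Y, hXY, hb⟩ := Nat.sInf_mem hne
  obtain ⟨hdisj, hne2, C, hC, hcolC, hXcol⟩ := hXY
  obtain ⟨K, hK⟩ := hC
  obtain ⟨col⟩ := hcolC
  set c : V → Bool := fun w => if h : w ∈ C then decide (col ⟨w, h⟩ = 1) else false with hc_def
  have hc : ∀ a b, a ∈ C → b ∈ C → G.Adj a b → c a ≠ c b :=
    proper_of_coloring col c (fun w h => by rw [hc_def]; exact dif_pos h)
  have hCsub : C ⊆ (X ∪ Y)ᶜ := by
    rw [hK]; rintro _ ⟨w, _, rfl⟩; exact w.2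
  have hclose : ∀ u ∈ C, ∀ v, v ∈ (X ∪ Y)ᶜ → G.Adj u v → v ∈ C := by
    intro u hu v hv hadj
    rw [hK] at hu ⊢
    obtain ⟨u', hu', rfl⟩ := hu
    refine ⟨⟨v, hv⟩, ?_, rfl⟩
    rw [ConnectedComponent.mem_supp_iff] at hu' ⊢
    rw [← hu']
    exact ConnectedComponent.sound ⟨(Walk.cons (by exact hadj.symm : (G.induce (X ∪ Y)ᶜ).Adj ⟨v, hv⟩ u') Walk.nil)⟩
  -- key claim: all neighbors of a fixed x ∈ X inside C get the same color
  have hclaim : ∀ x ∈ X, ∀ u ∈ C, ∀ v ∈ C, G.Adj x u → G.Adj x v → c u = c v := by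
    intro x hx u hu v hv hxu hxv
    obtain ⟨colx⟩ := hXcol x hx
    set cx : V → Bool := fun w => if h : w ∈ C ∪ {x} then decide (colx ⟨w, h⟩ = 1) else false
      with hcx_def
    have hcx : ∀ a b, a ∈ C ∪ {x} → b ∈ C ∪ {x} → G.Adj a b → cx a ≠ cx b :=
      proper_of_coloring colx cx (fun w h => by rw [hcx_def]; exact dif_pos h)
    -- get a walk from u to v inside C
    rw [hK] at hu hv
    obtain ⟨u', hu', rfl⟩ := hu
    obtain ⟨v', hv', rfl⟩ := hv
    rw [ConnectedComponent.mem_supp_iff] at hu' hv'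
    have hreach : (G.induce (X ∪ Y)ᶜ).Reachable u' v' :=
      ConnectedComponent.exact (hu'.trans hv'.symm)
    obtain ⟨q⟩ := hreach
    obtain ⟨p, hp⟩ := lift_walk q
    have hsupp : ∀ w ∈ p.support, w ∈ C := by
      intro w hw
      obtain ⟨w', rfl, hr⟩ := hp w hw
      rw [hK]
      exact ⟨w', by rw [ConnectedComponent.mem_supp_iff, ← hv']; exact ConnectedComponent.sound hr, rfl⟩
    have huC : (u' : V) ∈ C := hsupp _ p.start_mem_support
    have hvC : (v' : V) ∈ C := hsupp _ p.end_mem_support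
    have h1 : c u' = c v' ↔ Even p.length := parity_lemma C c hc p hsupp
    have h2 : cx u' = cx v' ↔ Even p.length :=
      parity_lemma (C ∪ {x}) cx hcx p (fun w hw => Or.inl (hsupp w hw))
    have h3 : cx x ≠ cx u' := hcx x u' (Or.inr rfl) (Or.inl huC) hxu
    have h4 : cx x ≠ cx v' := hcx x v' (Or.inr rfl) (Or.inl hvC) hxv
    have h5 : cx u' = cx v' := by
      have e1 : cx u' = !cx x := Bool.eq_not_iff.mpr (Ne.symm h3)
      have e2 : cx v' = !cx x := Bool.eq_not_iff.mpr (Ne.symm h4)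
      rw [e1, e2]
    rw [h1, ← h2]
    exact h5
  -- the separating set
  set S : Set (V × Bool) :=
    (Y ×ˢ (Set.univ : Set Bool)) ∪ {p : V × Bool | p.1 ∈ X ∧ ∃ u ∈ C, G.Adj p.1 u ∧ c u ≠ p.2}
    with hS_def
  -- members of C live outside S
  have hCS : ∀ w ∈ C, ∀ b : Bool, (w, b) ∉ S := by
    intro w hw b hmem
    have hw' := hCsub hw
    rcases hmem with hmem | hmem
    · exact hw' (Or.inr hmem.1)
    · exact hw' (Or.inl hmem.1)
  -- S separates
  have hsep : IsSeparating (timesK2 G) S := by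
    left
    intro hconn
    -- pick a vertex of C
    obtain ⟨w0, hw0⟩ := K.exists_rep
    have hu0 : (w0 : V) ∈ C := by
      rw [hK]; exact ⟨w0, by rw [ConnectedComponent.mem_supp_iff]; exact hw0, rfl⟩
    set u0 : V := (w0 : V)
    have ha : ((u0, c u0) : V × Bool) ∈ Sᶜ := hCS u0 hu0 (c u0)
    have hb' : ((u0, !c u0) : V × Bool) ∈ Sᶜ := hCS u0 hu0 (!c u0)
    obtain ⟨p⟩ := hconn.preconnected ⟨(u0, c u0), ha⟩ ⟨(u0, !c u0), hb'⟩
    have key := walk_ind (H := (timesK2 G).induce Sᶜ)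
      (P := fun q => q.val.1 ∈ C ∧ q.val.2 = c q.val.1) ?step p ⟨hu0, rfl⟩
    · have key2 : (!c u0) = c u0 := key.2
      simp at key2
    case step =>
      rintro ⟨⟨a1, a2⟩, haS⟩ ⟨⟨b1, b2⟩, hbS⟩ hadj ⟨h1, h2⟩
      simp only at h1 h2 ⊢
      have hadj' : G.Adj a1 b1 ∧ (⊤ : SimpleGraph Bool).Adj a2 b2 := hadj
      have hGadj : G.Adj a1 b1 := hadj'.1
      have hne12 : a2 ≠ b2 := hadj'.2.ne
      by_cases hbC : b1 ∈ (X ∪ Y)ᶜ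
      · have hb1C : b1 ∈ C := hclose a1 h1 b1 hbC hGadj
        refine ⟨hb1C, ?_⟩
        have hcc : c b1 ≠ c a1 := Ne.symm (hc a1 b1 h1 hb1C hGadj)
        have e1 : b2 = !a2 := Bool.eq_not_iff.mpr (Ne.symm hne12)
        have e2 : c b1 = !c a1 := Bool.eq_not_iff.mpr hcc
        rw [e1, e2, h2]
      · exfalso
        rcases not_not.mp (fun hcc => hbC hcc) with hXb | hYb
        · exact hbS (Or.inr ⟨hXb, a1, h1, hGadj.symm, by rw [← h2]; exact hadj'.2.ne⟩)
        · exact hbS (Or.inl ⟨hYb, Set.mem_univ _⟩)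
  -- cardinality bound
  have hcard : S.ncard ≤ X.ncard + 2 * Y.ncard := by
    have h1 : (Y ×ˢ (Set.univ : Set Bool)).ncard = 2 * Y.ncard := by
      rw [Set.ncard_eq_toFinset_card', Set.ncard_eq_toFinset_card' Y]
      rw [Set.toFinset_prod, Finset.card_product]
      simp [mul_comm]
    have h2 : ({p : V × Bool | p.1 ∈ X ∧ ∃ u ∈ C, G.Adj p.1 u ∧ c u ≠ p.2}).ncard ≤ X.ncard := by
      apply Set.ncard_le_ncard_of_injOn Prod.fst
      · rintro ⟨a1, a2⟩ ⟨hx, _⟩; exact hx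
      · rintro ⟨a1, a2⟩ ⟨hax, u, hu, hadj, hcu⟩ ⟨b1, b2⟩ ⟨hbx, u', hu', hadj', hcu'⟩ hfst
        simp only at hfst
        subst hfst
        have heq := hclaim a1 hax u hu u' hu' hadj hadj'
        have e1 : a2 = !c u := Bool.eq_not_iff.mpr (Ne.symm hcu)
        have e2 : b2 = !c u' := Bool.eq_not_iff.mpr (Ne.symm hcu')
        have hab : a2 = b2 := by rw [e1, e2, heq]
        rw [hab]
    calc S.ncard ≤ (Y ×ˢ (Set.univ : Set Bool)).ncard +
          ({p : V × Bool | p.1 ∈ X ∧ ∃ u ∈ C, G.Adj p.1 u ∧ c u ≠ p.2}).ncard :=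
          Set.ncard_union_le _ _
      _ ≤ 2 * Y.ncard + X.ncard := by omega
      _ = X.ncard + 2 * Y.ncard := by ring
  calc kappa (timesK2 G) ≤ S.ncard := Nat.sInf_le ⟨S, hsep, rfl⟩
    _ ≤ X.ncard + 2 * Y.ncard := hcard
    _ = bInv G := hb.symm
end

section
/- Let G be connected non-bipartite, and let S ⊆ V(G × K₂) satisfy |S| < min{2κ(G), b(G)} and S'_u := ({u} × {a,b}) − S ≠ ∅ for every u ∈ V(G). Define the graph G* on the classes S'_u (u ∈ V(G)), with S'_u and S'_v adjacent iff G × K₂ − S contains an edge with one end in S'_u and the other in S'_v. Then G* is connected. -/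
open SimpleGraph

universe u v

/-- If `G` is connected and non-bipartite, `|S| < min{2κ(G), b(G)}` and every class
`S'_u = ({u} × {a,b}) − S` is nonempty, then the graph `G*` on these classes is connected. -/
theorem stmt_12 {V : Type u} [Fintype V] (G : SimpleGraph V)
    (hconn : G.Connected) (hnbip : ¬ G.Colorable 2) (S : Set (V × Bool))
    (hsize : S.ncard < min (2 * kappa G) (bInv G))
    (hne : ∀ u : V, ∃ x : Bool, (u, x) ∉ S) :
    (starGraph G S).Connected := by
  classical
  set U : Set V := Prod.fst '' S with hUdef
  -- |U| = |S|
  have hinj : Set.InjOn Prod.fst S := by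
    intro p hp q hq h
    obtain ⟨x, hx⟩ := hne p.1
    ext
    · exact h
    · by_contra hsnd
      have hq' : (p.1, q.2) ∈ S := by rw [h]; exact hq
      have hp' : (p.1, p.2) ∈ S := hp
      have : (p.1, x) ∈ S := by
        cases x <;> cases hb : p.2 <;> cases hc : q.2 <;> simp_all
      exact hx this
  have hScard : U.ncard = S.ncard := Set.ncard_image_of_injOn hinj
  have hbU : U.ncard < bInv G := by
    rw [hScard]; exact lt_of_lt_of_le hsize (min_le_right _ _)
  have hkU : U.ncard < 2 * kappa G := by
    rw [hScard]; exact lt_of_lt_of_le hsize (min_le_left _ _)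
  -- broken edges have both ends in U
  have hbroken : ∀ u v : V, G.Adj u v → ¬ (starGraph G S).Adj u v → u ∈ U ∧ v ∈ U := by
    intro u v hadj hn
    have h2 : ∀ x y : Bool, (u, x) ∉ S → (v, y) ∉ S → ¬ (timesK2 G).Adj (u, x) (v, y) :=
      fun x y hx hy ht => hn ⟨hadj.ne, x, y, hx, hy, ht⟩
    constructor
    · obtain ⟨y, hy⟩ := hne v
      by_contra huU
      have huS : (u, !y) ∉ S := fun h => huU ⟨(u, !y), h, rfl⟩
      exact h2 (!y) y huS hy ⟨hadj, by simp⟩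
    · obtain ⟨x, hx⟩ := hne u
      by_contra hvU
      have hvS : (v, !x) ∉ S := fun h => hvU ⟨(v, !x), h, rfl⟩
      exact h2 x (!x) hx hvS ⟨hadj, by simp⟩
  by_contra hnc
  by_cases hcase : ∀ v : V, ∃ w : V, (starGraph G S).Reachable v w ∧ w ∉ U
  · -- every reachability class leaves U : get two disjoint separators
    have hpre : ¬ (starGraph G S).Preconnected := fun h => hnc ((SimpleGraph.connected_iff _).mpr ⟨h, hconn.nonempty⟩)
    rw [SimpleGraph.Preconnected] at hpre
    push_neg at hpre
    obtain ⟨a, b, hab⟩ := hpre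
    obtain ⟨a', haa', ha'U⟩ := hcase a
    obtain ⟨b', hbb', hb'U⟩ := hcase b
    have hab' : ¬ (starGraph G S).Reachable a' b' := fun h =>
      hab (haa'.trans (h.trans hbb'.symm))
    -- separator construction
    have hsep : ∀ c d : V, c ∉ U → d ∉ U → ¬ (starGraph G S).Reachable c d →
        kappa G ≤ ({w | (starGraph G S).Reachable c w} ∩ U).ncard := by
      intro c d hcU hdU hcd
      set XA : Set V := {w | (starGraph G S).Reachable c w} ∩ U with hXA
      have hcA : c ∈ (XA)ᶜ := fun h => hcU h.2
      have hdA : d ∈ (XA)ᶜ := fun h => hdU h.2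
      have hnconn : ¬ (G.induce (XA)ᶜ).Connected := by
        intro hc
        have hr : (G.induce (XA)ᶜ).Reachable ⟨c, hcA⟩ ⟨d, hdA⟩ := hc.preconnected _ _
        have key : ∀ (p q : ↥(XA)ᶜ) (w : (G.induce (XA)ᶜ).Walk p q),
            (starGraph G S).Reachable c p.val → (starGraph G S).Reachable c q.val := by
          intro p q w
          induction w with
          | nil => exact id
          | cons h t ih =>
            intro hp
            rename_i p r q
            apply ih
            by_cases hst : (starGraph G S).Adj p.val r.val
            · exact hp.trans hst.reachable
            · have hb := hbroken p.val r.val h hst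
              exact absurd ⟨hp, hb.1⟩ p.property
        obtain ⟨w⟩ := hr
        exact hcd (key _ _ w (SimpleGraph.Reachable.refl c))
      exact Nat.sInf_le ⟨XA, Or.inl hnconn, rfl⟩
    have hA := hsep a' b' ha'U hb'U hab'
    have hB := hsep b' a' hb'U ha'U (fun h => hab' h.symm)
    set XA : Set V := {w | (starGraph G S).Reachable a' w} ∩ U
    set XB : Set V := {w | (starGraph G S).Reachable b' w} ∩ U
    have hdisj : Disjoint XA XB := by
      rw [Set.disjoint_left]
      rintro w ⟨hw1, _⟩ ⟨hw2, _⟩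
      exact hab' (hw1.trans hw2.symm)
    have hsum : XA.ncard + XB.ncard ≤ U.ncard := by
      rw [← Set.ncard_union_eq hdisj]
      exact Set.ncard_le_ncard (Set.union_subset Set.inter_subset_right
        Set.inter_subset_right) U.toFinite
    omega
  · -- some vertex whose reachability class is inside U : b-pair
    push_neg at hcase
    obtain ⟨v, hv⟩ := hcase
    have hvU : v ∈ U := hv v (SimpleGraph.Reachable.refl v)
    have hNbr : ∀ x : V, G.Adj v x → x ∈ U ∧ x ≠ v := by
      intro x hadj
      refine ⟨?_, hadj.ne'⟩
      by_cases hst : (starGraph G S).Adj v x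
      · exact hv x hst.reachable
      · exact (hbroken v x hadj hst).2
    set X : Set V := U \ {v} with hXdef
    have hvX : v ∈ (X ∪ (∅ : Set V))ᶜ := by simp [hXdef]
    set s : Set V := (X ∪ (∅ : Set V))ᶜ with hsdef
    have hiso : ∀ y : ↥s, ¬ (G.induce s).Adj ⟨v, hvX⟩ y := by
      intro y hadj
      have hadj' : G.Adj v y.val := hadj
      have hy := hNbr y.val hadj'
      have hmem : y.val ∈ X := ⟨hy.1, hy.2⟩
      have hnot := y.property
      simp [hsdef] at hnot
      exact hnot hmem
    set K : (G.induce s).ConnectedComponent :=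
      (G.induce s).connectedComponentMk ⟨v, hvX⟩ with hKdef
    have hC : (Subtype.val '' K.supp : Set V) = {v} := by
      apply Set.eq_singleton_iff_unique_mem.mpr
      constructor
      · exact ⟨⟨v, hvX⟩, (SimpleGraph.ConnectedComponent.mem_supp_iff _ _).mpr rfl, rfl⟩
      · rintro z ⟨z', hz', rfl⟩
        have hreach : (G.induce s).Reachable ⟨v, hvX⟩ z' :=
          (SimpleGraph.ConnectedComponent.eq.mp
            ((SimpleGraph.ConnectedComponent.mem_supp_iff _ _).mp hz')).symm
        obtain ⟨w⟩ := hreach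
        cases w with
        | nil => rfl
        | cons h t => exact absurd h (hiso _)
    have hbp : IsBPair G X ∅ := by
      refine ⟨Set.disjoint_empty X, ⟨v, hvX⟩, {v}, ⟨K, hC.symm⟩, ?_, ?_⟩
      · exact ⟨SimpleGraph.Coloring.mk (fun _ => (0 : Fin 2)) (by
          intro a b hadj _
          have hadj' : G.Adj a.val b.val := hadj
          exact hadj.ne (Subtype.ext (a.property.trans b.property.symm)))⟩
      · intro x hx
        refine ⟨SimpleGraph.Coloring.mk
          (fun z => if (z : V) = v then (0 : Fin 2) else 1) ?_⟩
        intro p q hadj hcol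
        have hadj' : G.Adj p.val q.val := hadj
        by_cases hp : p.val = v <;> by_cases hq : q.val = v
        · exact hadj.ne (Subtype.ext (hp.trans hq.symm))
        · simp [hp, hq] at hcol
        · simp [hp, hq] at hcol
        · have hp' : p.val = x := by
            have := p.property
            simp at this
            tauto
          have hq' : q.val = x := by
            have := q.property
            simp at this
            tauto
          exact hadj.ne (Subtype.ext (hp'.trans hq'.symm))
    have hble : bInv G ≤ X.ncard := Nat.sInf_le ⟨X, ∅, hbp, by simp⟩
    have hXcard : X.ncard = U.ncard - 1 := Set.ncard_diff_singleton_of_mem hvU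
    have hUpos : 0 < U.ncard := (Set.ncard_pos U.toFinite).mpr ⟨v, hvU⟩
    omega
end

section
/- Let G be connected non-bipartite and S ⊆ V(G × K₂) with |S| < min{2κ(G), b(G)}. Then G × K₂ − S is connected. Consequently κ(G × K₂) ≥ min{2κ(G), b(G)}. -/
open SimpleGraph

universe u v

/-! ### Auxiliary lemmas -/

section Aux

variable {α : Type*}

lemma rtg_invariant {r : α → α → Prop} {P : α → Prop} (h : ∀ a b, r a b → P a → P b)
    {a b : α} (hr : Relation.ReflTransGen r a b) (ha : P a) : P b := by
  induction hr with
  | refl => exact ha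
  | tail _ hr ih => exact h _ _ hr ih

lemma induce_reachable_iff (H : SimpleGraph α) (s : Set α) (a b : s) :
    (H.induce s).Reachable a b ↔
      Relation.ReflTransGen (fun x y => H.Adj x y ∧ x ∈ s ∧ y ∈ s) a.val b.val := by
  constructor
  · rintro ⟨w⟩
    induction w with
    | nil => exact Relation.ReflTransGen.refl
    | cons h p ih =>
      rename_i x y z
      exact Relation.ReflTransGen.head ⟨h, x.2, y.2⟩ ih
  · intro h
    have key : ∀ c (h : Relation.ReflTransGen (fun x y => H.Adj x y ∧ x ∈ s ∧ y ∈ s) a.val c)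
        (hc : c ∈ s), (H.induce s).Reachable a ⟨c, hc⟩ := by
      intro c h
      induction h with
      | refl => intro hc; exact Reachable.refl _
      | tail _ hr ih =>
        rename_i x y _
        intro hy
        exact (ih hr.2.1).trans (Adj.reachable (by exact hr.1))
    have := key b.val h b.2
    simpa using this

end Aux

section Main

variable {V : Type u}

/-- Alive-adjacency: adjacency in `G × K₂ − S`. -/
def aAdj (G : SimpleGraph V) (S : Set (V × Bool)) (a b : V × Bool) : Prop :=
  (timesK2 G).Adj a b ∧ a ∉ S ∧ b ∉ S

/-- Reachability in `G × K₂ − S`. -/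
def ARel (G : SimpleGraph V) (S : Set (V × Bool)) : V × Bool → V × Bool → Prop :=
  Relation.ReflTransGen (aAdj G S)

lemma aAdj_symm (G : SimpleGraph V) (S : Set (V × Bool)) : Symmetric (aAdj G S) :=
  fun _ _ h => ⟨h.1.symm, h.2.2, h.2.1⟩

lemma ARel.symm {G : SimpleGraph V} {S : Set (V × Bool)} {a b : V × Bool}
    (h : ARel G S a b) : ARel G S b a :=
  (@Relation.ReflTransGen.stdSymm _ _ ⟨fun _ _ h => aAdj_symm G S h⟩).symm _ _ h

lemma ARel.trans {G : SimpleGraph V} {S : Set (V × Bool)} {a b c : V × Bool}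
    (h : ARel G S a b) (h' : ARel G S b c) : ARel G S a c :=
  Relation.ReflTransGen.trans h h'

lemma ARel.rfl {G : SimpleGraph V} {S : Set (V × Bool)} {a : V × Bool} : ARel G S a a :=
  Relation.ReflTransGen.refl

lemma ARel.single {G : SimpleGraph V} {S : Set (V × Bool)} {a b : V × Bool}
    (h : aAdj G S a b) : ARel G S a b :=
  Relation.ReflTransGen.single h

lemma ARel.snoc {G : SimpleGraph V} {S : Set (V × Bool)} {a b c : V × Bool}
    (h : ARel G S a b) (h' : aAdj G S b c) : ARel G S a c :=
  Relation.ReflTransGen.tail h h'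

def Yset (S : Set (V × Bool)) : Set V := {u | (u, false) ∈ S ∧ (u, true) ∈ S}
def Zset (S : Set (V × Bool)) : Set V :=
  {u | ((u, false) ∈ S ∧ (u, true) ∉ S) ∨ ((u, false) ∉ S ∧ (u, true) ∈ S)}

lemma Y_disj_Z (S : Set (V × Bool)) : Disjoint (Yset S) (Zset S) := by
  rw [Set.disjoint_left]
  rintro u ⟨h0, h1⟩ (⟨_, h⟩ | ⟨h, _⟩) <;> exact h ‹_›

lemma mem_Zset_of {S : Set (V × Bool)} {v : V} (hv : v ∉ Yset S)
    (h : (v, false) ∈ S ∨ (v, true) ∈ S) : v ∈ Zset S := by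
  rcases h with h | h
  · exact Or.inl ⟨h, fun h' => hv ⟨h, h'⟩⟩
  · exact Or.inr ⟨fun h' => hv ⟨h', h⟩, h⟩

lemma zset_unique_alive {S : Set (V × Bool)} {v : V} (hv : v ∈ Zset S) :
    ∃ y : Bool, (v, y) ∉ S ∧ (v, !y) ∈ S := by
  rcases hv with ⟨h0, h1⟩ | ⟨h0, h1⟩
  · exact ⟨true, h1, by simpa using h0⟩
  · exact ⟨false, h0, by simpa using h1⟩

lemma count_lemma [Fintype V] (S : Set (V × Bool)) :
    2 * (Yset S).ncard + (Zset S).ncard ≤ S.ncard := by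
  classical
  set A1 : Set (V × Bool) := (fun u => (u, false)) '' Yset S with hA1
  set A2 : Set (V × Bool) := (fun u => (u, true)) '' Yset S with hA2
  set A3 : Set (V × Bool) := {p | p ∈ S ∧ p.1 ∈ Zset S} with hA3
  have hsub : A1 ∪ A2 ∪ A3 ⊆ S := by
    rintro p ((⟨u, hu, rfl⟩ | ⟨u, hu, rfl⟩) | ⟨hp, _⟩)
    · exact hu.1
    · exact hu.2
    · exact hp
  have d12 : Disjoint A1 A2 := by
    rw [Set.disjoint_left]
    rintro p ⟨u, hu, rfl⟩ ⟨w, hw, hp⟩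
    simpa using congrArg Prod.snd hp
  have d13 : Disjoint (A1 ∪ A2) A3 := by
    rw [Set.disjoint_left]
    rintro p (⟨u, hu, rfl⟩ | ⟨u, hu, rfl⟩) ⟨_, hz⟩ <;>
      exact (Set.disjoint_left.mp (Y_disj_Z S)) hu hz
  have hinj : ∀ b : Bool, Function.Injective (fun u : V => (u, b)) := by
    intro b u w h; simpa using congrArg Prod.fst h
  have e1 : A1.ncard = (Yset S).ncard := Set.ncard_image_of_injective _ (hinj false)
  have e2 : A2.ncard = (Yset S).ncard := Set.ncard_image_of_injective _ (hinj true)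
  have e3 : (Zset S).ncard ≤ A3.ncard := by
    have hss : Zset S ⊆ Prod.fst '' A3 := by
      rintro u (⟨h0, h1⟩ | ⟨h0, h1⟩)
      · exact ⟨(u, false), ⟨h0, Or.inl ⟨h0, h1⟩⟩, rfl⟩
      · exact ⟨(u, true), ⟨h1, Or.inr ⟨h0, h1⟩⟩, rfl⟩
    calc (Zset S).ncard ≤ (Prod.fst '' A3).ncard :=
          Set.ncard_le_ncard hss (Set.toFinite _)
      _ ≤ A3.ncard := Set.ncard_image_le (Set.toFinite _)
  calc 2 * (Yset S).ncard + (Zset S).ncard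
      ≤ (A1.ncard + A2.ncard) + A3.ncard := by omega
    _ = (A1 ∪ A2).ncard + A3.ncard := by
        rw [Set.ncard_union_eq d12 (Set.toFinite _) (Set.toFinite _)]
    _ = (A1 ∪ A2 ∪ A3).ncard := by
        rw [Set.ncard_union_eq d13 (Set.toFinite _) (Set.toFinite _)]
    _ ≤ S.ncard := Set.ncard_le_ncard hsub (Set.toFinite _)

lemma bInv_le_of_pair {G : SimpleGraph V} {X Y : Set V} (h : IsBPair G X Y) :
    bInv G ≤ X.ncard + 2 * Y.ncard :=
  Nat.sInf_le ⟨X, Y, h, rfl⟩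

lemma kappa_le_of_sep {G : SimpleGraph V} {T : Set V} (h : IsSeparating G T) :
    kappa G ≤ T.ncard :=
  Nat.sInf_le ⟨T, h, rfl⟩

/-- Case C: an alive vertex, all of whose neighbours have a dead copy, yields a cheap b-pair. -/
lemma lemC (G : SimpleGraph V) (S : Set (V × Bool)) (u₀ : V)
    (hu₀ : u₀ ∉ Yset S)
    (hnb : ∀ w, G.Adj u₀ w → ((w, false) ∈ S ∨ (w, true) ∈ S)) :
    ∃ X Y : Set V, IsBPair G X Y ∧ X ⊆ Zset S ∧ Y = Yset S := by
  classical
  set Y : Set V := Yset S with hY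
  set X : Set V := {w | G.Adj u₀ w ∧ w ∉ Y} with hX
  have hXZ : X ⊆ Zset S := fun w hw => mem_Zset_of hw.2 (hnb w hw.1)
  have hdisj : Disjoint X Y := Set.disjoint_left.mpr (fun w hw => hw.2)
  have hu₀mem : u₀ ∈ (X ∪ Y)ᶜ := by
    rintro (⟨h, _⟩ | h)
    · exact G.loopless.irrefl u₀ h
    · exact hu₀ h
  have step : ∀ a b : V, (G.Adj a b ∧ a ∈ (X ∪ Y)ᶜ ∧ b ∈ (X ∪ Y)ᶜ) → a = u₀ → b = u₀ := by
    rintro a b ⟨hab, _, hbmem⟩ rfl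
    exfalso
    by_cases hbY : b ∈ Y
    · exact hbmem (Or.inr hbY)
    · exact hbmem (Or.inl ⟨hab, hbY⟩)
  refine ⟨X, Y, ⟨hdisj, ⟨u₀, hu₀mem⟩, {u₀}, ?_, ?_, ?_⟩, hXZ, rfl⟩
  · refine ⟨(G.induce ((X ∪ Y)ᶜ)).connectedComponentMk ⟨u₀, hu₀mem⟩, ?_⟩
    ext w
    simp only [Set.mem_singleton_iff, Set.mem_image]
    constructor
    · rintro rfl
      exact ⟨⟨_, hu₀mem⟩, by rw [ConnectedComponent.mem_supp_iff], rfl⟩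
    · rintro ⟨x, hx, rfl⟩
      rw [ConnectedComponent.mem_supp_iff, ConnectedComponent.eq] at hx
      have hr := (induce_reachable_iff G ((X ∪ Y)ᶜ) _ _).mp hx.symm
      exact rtg_invariant step hr rfl
  · refine ⟨Coloring.mk (fun _ => (0 : Fin 2)) ?_⟩
    rintro ⟨a, ha⟩ ⟨b, hb⟩ hadj
    exfalso
    have hab : G.Adj a b := hadj
    simp only [Set.mem_singleton_iff] at ha hb
    exact G.loopless.irrefl u₀ (by rwa [ha, hb] at hab)
  · intro x hx
    have hxu : x ≠ u₀ := fun h => G.loopless.irrefl u₀ (h ▸ hx.1).symm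
    refine ⟨Coloring.mk (fun p => if p.val = u₀ then (0 : Fin 2) else 1) ?_⟩
    rintro ⟨a, ha⟩ ⟨b, hb⟩ hadj heq
    have hab : G.Adj a b := hadj
    simp only [Set.union_singleton, Set.mem_insert_iff, Set.mem_singleton_iff] at ha hb
    rcases ha with rfl | rfl <;> rcases hb with rfl | rfl
    · exact hab.ne rfl
    · simp [hxu, hab.ne'] at heq
    · simp [hxu, hab.ne] at heq
    · exact hab.ne rfl

/-- The set of singly-hit classes whose survivor is connected to `base`. -/
def Phi (G : SimpleGraph V) (S : Set (V × Bool)) (base : V × Bool) : Set V :=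
  {w | w ∈ Zset S ∧ ∃ b : Bool, (w, b) ∉ S ∧ ARel G S base (w, b)}

/-- Case A auxiliary: a separating set around the component of a doubly-alive,
fiber-connected vertex. -/
lemma lemA_aux (G : SimpleGraph V) (S : Set (V × Bool)) (u₀ w₀ : V)
    (hu0f : (u₀, false) ∉ S) (hu0t : (u₀, true) ∉ S)
    (hw0f : (w₀, false) ∉ S) (hw0t : (w₀, true) ∉ S)
    (hufib : ARel G S (u₀, false) (u₀, true))
    (hwfib : ARel G S (w₀, false) (w₀, true))
    (hsep : ¬ ARel G S (u₀, false) (w₀, false)) :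
    ∃ T : Set V, IsSeparating G T ∧ T ⊆ Yset S ∪ Phi G S (u₀, false) := by
  classical
  set W₂ : Set V := {u | (u, false) ∉ S ∧ (u, true) ∉ S ∧
      ARel G S (u₀, false) (u, false) ∧ ARel G S (u₀, false) (u, true)} with hW₂
  set T : Set V := {w | w ∉ W₂ ∧ ∃ u ∈ W₂, G.Adj u w} with hT
  have hu₀W : u₀ ∈ W₂ := ⟨hu0f, hu0t, ARel.rfl, hufib⟩
  have hTW : ∀ w ∈ T, w ∉ W₂ := fun w hw => hw.1
  have hTsub : T ⊆ Yset S ∪ Phi G S (u₀, false) := by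
    rintro w ⟨hwW, u, huW, hadj⟩
    have h0 : (w, false) ∉ S → ARel G S (u₀, false) (w, false) := fun hal =>
      (huW.2.2.2).snoc ⟨(show G.Adj u w ∧ (⊤ : SimpleGraph Bool).Adj true false from ⟨hadj, by simp⟩), huW.2.1, hal⟩
    have h1 : (w, true) ∉ S → ARel G S (u₀, false) (w, true) := fun hal =>
      (huW.2.2.1).snoc ⟨(show G.Adj u w ∧ (⊤ : SimpleGraph Bool).Adj false true from ⟨hadj, by simp⟩), huW.1, hal⟩
    by_cases hf : (w, false) ∈ S
    · by_cases ht : (w, true) ∈ S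
      · exact Or.inl ⟨hf, ht⟩
      · exact Or.inr ⟨Or.inl ⟨hf, ht⟩, true, ht, h1 ht⟩
    · by_cases ht : (w, true) ∈ S
      · exact Or.inr ⟨Or.inr ⟨hf, ht⟩, false, hf, h0 hf⟩
      · exact absurd ⟨hf, ht, h0 hf, h1 ht⟩ hwW
  have hw₀W : w₀ ∉ W₂ := fun h => hsep h.2.2.1
  have hw₀T : w₀ ∉ T := by
    intro h
    rcases hTsub h with hY | hP
    · exact hw0f hY.1
    · rcases hP.1 with ⟨h', _⟩ | ⟨_, h'⟩
      · exact hw0f h'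
      · exact hw0t h'
  refine ⟨T, Or.inl ?_, hTsub⟩
  intro hconn
  have hreach := hconn.preconnected ⟨u₀, fun h => (hTW u₀ h) hu₀W⟩ ⟨w₀, hw₀T⟩
  have hr := (induce_reachable_iff G Tᶜ _ _).mp hreach
  have : w₀ ∈ W₂ := by
    refine rtg_invariant (P := fun c => c ∈ W₂) ?_ hr hu₀W
    rintro a b ⟨hab, _, hbmem⟩ haW
    by_contra hbW
    exact hbmem ⟨hbW, a, haW, hab⟩
  exact hw₀W this

/-- Case A: two doubly-alive, fiber-connected vertices in different components. -/
lemma lemA [Fintype V] (G : SimpleGraph V) (S : Set (V × Bool)) (u₀ w₀ : V)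
    (hu0f : (u₀, false) ∉ S) (hu0t : (u₀, true) ∉ S)
    (hw0f : (w₀, false) ∉ S) (hw0t : (w₀, true) ∉ S)
    (hufib : ARel G S (u₀, false) (u₀, true))
    (hwfib : ARel G S (w₀, false) (w₀, true))
    (hsep : ¬ ARel G S (u₀, false) (w₀, false)) :
    2 * kappa G ≤ S.ncard := by
  classical
  obtain ⟨T, sepT, subT⟩ := lemA_aux G S u₀ w₀ hu0f hu0t hw0f hw0t hufib hwfib hsep
  obtain ⟨T', sepT', subT'⟩ := lemA_aux G S w₀ u₀ hw0f hw0t hu0f hu0t hwfib hufib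
    (fun h => hsep h.symm)
  have hdisj : Disjoint (Phi G S (u₀, false)) (Phi G S (w₀, false)) := by
    rw [Set.disjoint_left]
    rintro z ⟨hz, b, hb, hrb⟩ ⟨_, b', hb', hrb'⟩
    have hbb : b = b' := by
      obtain ⟨y, hy, hy'⟩ := zset_unique_alive hz
      have e1 : b = y := by
        by_contra h
        have : b = !y := by revert h; cases b <;> cases y <;> simp
        exact hb (this ▸ hy')
      have e2 : b' = y := by
        by_contra h
        have : b' = !y := by revert h; cases b' <;> cases y <;> simp
        exact hb' (this ▸ hy')
      rw [e1, e2]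
    subst hbb
    exact hsep (hrb.trans hrb'.symm)
  have hPZ : Phi G S (u₀, false) ∪ Phi G S (w₀, false) ⊆ Zset S := by
    rintro z (hz | hz) <;> exact hz.1
  have hk1 : kappa G ≤ T.ncard := kappa_le_of_sep sepT
  have hk2 : kappa G ≤ T'.ncard := kappa_le_of_sep sepT'
  have hT1 : T.ncard ≤ (Yset S).ncard + (Phi G S (u₀, false)).ncard :=
    le_trans (Set.ncard_le_ncard subT (Set.toFinite _)) (Set.ncard_union_le _ _)
  have hT2 : T'.ncard ≤ (Yset S).ncard + (Phi G S (w₀, false)).ncard :=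
    le_trans (Set.ncard_le_ncard subT' (Set.toFinite _)) (Set.ncard_union_le _ _)
  have hPP : (Phi G S (u₀, false)).ncard + (Phi G S (w₀, false)).ncard ≤ (Zset S).ncard := by
    rw [← Set.ncard_union_eq hdisj (Set.toFinite _) (Set.toFinite _)]
    exact Set.ncard_le_ncard hPZ (Set.toFinite _)
  have := count_lemma S
  omega
-- temporarily standalone: will append to full.lean (needs its defs); test by concatenation
section LemB

variable {V : Type u}

lemma aAdj_mk {G : SimpleGraph V} {S : Set (V × Bool)} {a b : V} {x y : Bool}
    (hab : G.Adj a b) (hxy : x ≠ y) (ha : (a, x) ∉ S) (hb : (b, y) ∉ S) :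
    aAdj G S (a, x) (b, y) :=
  ⟨(show G.Adj a b ∧ (⊤ : SimpleGraph Bool).Adj x y from ⟨hab, hxy⟩), ha, hb⟩

/-- Fullness: both copies of `u` are alive. -/
def fullp (S : Set (V × Bool)) (u : V) : Prop := (u, false) ∉ S ∧ (u, true) ∉ S

lemma fullp_alive {S : Set (V × Bool)} {u : V} (h : fullp S u) (b : Bool) : (u, b) ∉ S := by
  cases b
  · exact h.1
  · exact h.2

lemma not_fullp {S : Set (V × Bool)} {u : V} (h : ¬ fullp S u) :
    (u, false) ∈ S ∨ (u, true) ∈ S := by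
  by_cases h0 : (u, false) ∈ S
  · exact Or.inl h0
  · by_cases h1 : (u, true) ∈ S
    · exact Or.inr h1
    · exact absurd ⟨h0, h1⟩ h

/-- Case B: a doubly-alive vertex whose two copies are separated yields a b-pair. -/
lemma lemB (G : SimpleGraph V) (S : Set (V × Bool)) (u₀ : V)
    (h0 : (u₀, false) ∉ S) (h1 : (u₀, true) ∉ S)
    (hsplit : ¬ ARel G S (u₀, false) (u₀, true)) :
    ∃ X Y : Set V, IsBPair G X Y ∧ X ⊆ Zset S ∧ Y = Yset S := by
  classical
  have noMix : ∀ p, ARel G S (u₀, false) p → ARel G S (u₀, true) p → False := fun p hf ht =>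
    hsplit (hf.trans ht.symm)
  set K : Set V :=
    {u | Relation.ReflTransGen (fun a b => G.Adj a b ∧ fullp S a ∧ fullp S b) u₀ u} with hK
  have hu₀K : u₀ ∈ K := Relation.ReflTransGen.refl
  have hKP : ∀ u ∈ K, fullp S u ∧
      ((ARel G S (u₀, false) (u, false) ∧ ARel G S (u₀, true) (u, true)) ∨
       (ARel G S (u₀, false) (u, true) ∧ ARel G S (u₀, true) (u, false))) := by
    intro u hu
    have hu' : Relation.ReflTransGen (fun a b => G.Adj a b ∧ fullp S a ∧ fullp S b) u₀ u := hu
    refine rtg_invariant (P := fun w => fullp S w ∧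
      ((ARel G S (u₀, false) (w, false) ∧ ARel G S (u₀, true) (w, true)) ∨
       (ARel G S (u₀, false) (w, true) ∧ ARel G S (u₀, true) (w, false)))) ?_ hu'
      ⟨⟨h0, h1⟩, Or.inl ⟨ARel.rfl, ARel.rfl⟩⟩
    rintro a b ⟨hab, hfa, hfb⟩ ⟨_, hrel⟩
    refine ⟨hfb, ?_⟩
    rcases hrel with ⟨hf, ht⟩ | ⟨hf, ht⟩
    · exact Or.inr ⟨hf.snoc (aAdj_mk hab (by simp) hfa.1 hfb.2),
        ht.snoc (aAdj_mk hab (by simp) hfa.2 hfb.1)⟩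
    · exact Or.inl ⟨hf.snoc (aAdj_mk hab (by simp) hfa.2 hfb.1),
        ht.snoc (aAdj_mk hab (by simp) hfa.1 hfb.2)⟩
  have hKfull : ∀ u ∈ K, fullp S u := fun u hu => (hKP u hu).1
  let col : V → Bool := fun u => if ARel G S (u₀, false) (u, false) then false else true
  have colSpec : ∀ u ∈ K, ARel G S (u₀, false) (u, col u) ∧
      ARel G S (u₀, true) (u, !col u) ∧ ¬ ARel G S (u₀, false) (u, !col u) := by
    intro u hu
    rcases (hKP u hu).2 with ⟨hf, ht⟩ | ⟨hf, ht⟩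
    · have hcu : col u = false := by simp only [col, if_pos hf]
      rw [hcu]
      exact ⟨hf, by simpa using ht, by simpa using (fun h => noMix _ h ht)⟩
    · have hnf : ¬ ARel G S (u₀, false) (u, false) := fun h => noMix _ h ht
      have hcu : col u = true := by simp only [col, if_neg hnf]
      rw [hcu]
      exact ⟨hf, by simpa using ht, by simpa using hnf⟩
  have hKadj : ∀ u ∈ K, ∀ w, G.Adj u w → fullp S w → w ∈ K := by
    intro u hu w hadj hfw
    exact Relation.ReflTransGen.tail hu ⟨hadj, hKfull u hu, hfw⟩
  have colProper : ∀ u ∈ K, ∀ w ∈ K, G.Adj u w → col u ≠ col w := by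
    intro u hu w hw hadj heq
    have hr : ARel G S (u₀, false) (w, !col u) :=
      (colSpec u hu).1.snoc (aAdj_mk hadj (by cases col u <;> simp)
        (fullp_alive (hKfull u hu) _) (fullp_alive (hKfull w hw) _))
    rw [heq] at hr
    exact (colSpec w hw).2.2 hr
  set X : Set V := {w | w ∉ K ∧ w ∉ Yset S ∧ ∃ u ∈ K, G.Adj u w} with hX
  have hXZ : X ⊆ Zset S := by
    rintro w ⟨hwK, hwY, u, hu, hadj⟩
    refine mem_Zset_of hwY (not_fullp ?_)
    intro hfw
    exact hwK (hKadj u hu w hadj hfw)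
  have hfull_mem : ∀ u, fullp S u → u ∈ (X ∪ Yset S)ᶜ := by
    intro u hfu
    rintro (hX' | hY')
    · rcases zset_unique_alive (hXZ hX') with ⟨y, _, hy'⟩
      exact fullp_alive hfu _ hy'
    · exact hfu.1 hY'.1
  have monoNbr : ∀ x ∈ X, ∀ u ∈ K, ∀ u' ∈ K, G.Adj u x → G.Adj u' x → col u = col u' := by
    intro x hx u hu u' hu' ha ha'
    obtain ⟨y, hy, hy'⟩ := zset_unique_alive (hXZ hx)
    have key : ∀ w ∈ K, G.Adj w x → col w = !y → ARel G S (u₀, false) (x, y) := by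
      intro w hw hadj hcw
      exact (colSpec w hw).1.snoc (aAdj_mk hadj (by rw [hcw]; cases y <;> simp)
        (fullp_alive (hKfull w hw) _) hy)
    have key' : ∀ w ∈ K, G.Adj w x → col w = y → ARel G S (u₀, true) (x, y) := by
      intro w hw hadj hcw
      have := (colSpec w hw).2.1
      rw [hcw] at this
      exact this.snoc (aAdj_mk hadj (by cases y <;> simp)
        (fullp_alive (hKfull w hw) _) hy)
    by_contra hne
    have h1 : col u = y ∨ col u = !y := by cases col u <;> cases y <;> simp
    have h2 : col u' = y ∨ col u' = !y := by cases col u' <;> cases y <;> simp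
    rcases h1 with h1 | h1 <;> rcases h2 with h2 | h2
    · exact hne (h1.trans h2.symm)
    · exact noMix _ (key u' hu' ha' h2) (key' u hu ha h1)
    · exact noMix _ (key u hu ha h1) (key' u' hu' ha' h2)
    · exact hne (h1.trans h2.symm)
  have hdisj : Disjoint X (Yset S) := Set.disjoint_left.mpr (fun w hw => hw.2.1)
  have hu₀mem : u₀ ∈ (X ∪ Yset S)ᶜ := hfull_mem u₀ ⟨h0, h1⟩
  refine ⟨X, Yset S, ⟨hdisj, ⟨u₀, hu₀mem⟩, K, ?_, ?_, ?_⟩, hXZ, rfl⟩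
  · -- K is a component of G − (X ∪ Y)
    refine ⟨(G.induce ((X ∪ Yset S)ᶜ)).connectedComponentMk ⟨u₀, hu₀mem⟩, ?_⟩
    ext w
    simp only [Set.mem_image]
    constructor
    · intro hw
      have hmono : ∀ a b : V, (G.Adj a b ∧ fullp S a ∧ fullp S b) →
          (G.Adj a b ∧ a ∈ (X ∪ Yset S)ᶜ ∧ b ∈ (X ∪ Yset S)ᶜ) := by
        rintro a b ⟨hab, hfa, hfb⟩
        exact ⟨hab, hfull_mem a hfa, hfull_mem b hfb⟩
      have hr : Relation.ReflTransGen
          (fun a b => G.Adj a b ∧ a ∈ (X ∪ Yset S)ᶜ ∧ b ∈ (X ∪ Yset S)ᶜ) u₀ w :=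
        Relation.ReflTransGen.mono (fun a b h => hmono a b h) _ _ hw
      have hwmem : w ∈ (X ∪ Yset S)ᶜ := hfull_mem w (hKfull w hw)
      have hreach := (induce_reachable_iff G ((X ∪ Yset S)ᶜ) ⟨u₀, hu₀mem⟩ ⟨w, hwmem⟩).mpr hr
      exact ⟨⟨w, hwmem⟩, by
        rw [ConnectedComponent.mem_supp_iff, ConnectedComponent.eq]
        exact hreach.symm, rfl⟩
    · rintro ⟨x, hx, rfl⟩
      rw [ConnectedComponent.mem_supp_iff, ConnectedComponent.eq] at hx
      have hr := (induce_reachable_iff G ((X ∪ Yset S)ᶜ) _ _).mp hx.symm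
      refine rtg_invariant (P := fun c => c ∈ K) ?_ hr hu₀K
      rintro a b ⟨hab, _, hbmem⟩ haK
      by_cases hfb : fullp S b
      · exact hKadj a haK b hab hfb
      · exfalso
        have hbK : b ∉ K := fun h => hfb (hKfull b h)
        have hbY : b ∉ Yset S := fun h => hbmem (Or.inr h)
        exact hbmem (Or.inl ⟨hbK, hbY, a, haK, hab⟩)
  · -- K is bipartite
    refine ⟨Coloring.mk (fun p => if col p.val then (1 : Fin 2) else 0) ?_⟩
    rintro a b hadj heq
    have hab : G.Adj a.val b.val := hadj
    have heq' : (if col a.val then (1 : Fin 2) else 0) = (if col b.val then 1 else 0) := heq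
    refine colProper a.val a.2 b.val b.2 hab ?_
    cases hca : col a.val <;> cases hcb : col b.val <;> rw [hca, hcb] at heq' <;>
      first | rfl | simp at heq'
  · -- extensions are bipartite
    intro x hx
    obtain ⟨hxK, hxY, u₁, hu₁, hadj₁⟩ := hx
    refine ⟨Coloring.mk (fun p => if p.val = x then (if col u₁ then (0 : Fin 2) else 1)
      else (if col p.val then 1 else 0)) ?_⟩
    rintro a b hadj heq
    have hab : G.Adj a.val b.val := hadj
    have heq' : (if a.val = x then (if col u₁ then (0 : Fin 2) else 1)
        else (if col a.val then 1 else 0)) =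
        (if b.val = x then (if col u₁ then (0 : Fin 2) else 1)
        else (if col b.val then 1 else 0)) := heq
    have ha := a.2
    have hb := b.2
    simp only [Set.mem_union, Set.mem_singleton_iff] at ha hb
    rcases ha with haK | hax <;> rcases hb with hbK | hbx
    · have hax : a.val ≠ x := fun h => hxK (h ▸ haK)
      have hbx : b.val ≠ x := fun h => hxK (h ▸ hbK)
      rw [if_neg hax, if_neg hbx] at heq'
      refine colProper a.val haK b.val hbK hab ?_
      cases hca : col a.val <;> cases hcb : col b.val <;> rw [hca, hcb] at heq' <;>
        first | rfl | simp at heq'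
    · have hax : a.val ≠ x := fun h => hxK (h ▸ haK)
      have hca : col a.val = col u₁ := monoNbr x ⟨hxK, hxY, u₁, hu₁, hadj₁⟩ a.val haK u₁ hu₁
        (by rwa [hbx] at hab) hadj₁
      rw [if_neg hax, if_pos hbx, hca] at heq'
      cases hc1 : col u₁ <;> rw [hc1] at heq' <;> simp at heq'
    · have hbx' : b.val ≠ x := fun h => hxK (h ▸ hbK)
      have hcb : col b.val = col u₁ := monoNbr x ⟨hxK, hxY, u₁, hu₁, hadj₁⟩ b.val hbK u₁ hu₁
        ((by rwa [hax] at hab : G.Adj x b.val).symm) hadj₁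
      rw [if_pos hax, if_neg hbx', hcb] at heq'
      cases hc1 : col u₁ <;> rw [hc1] at heq' <;> simp at heq'
    · exact G.loopless.irrefl x (by rwa [hax, hbx] at hab)

end LemB

lemma kappa_le_card_sub_one [Fintype V] (G : SimpleGraph V) (v : V) :
    kappa G ≤ Fintype.card V - 1 := by
  classical
  have hsep : IsSeparating G ({v}ᶜ) := Or.inr (by
    rw [compl_compl]
    exact Set.subsingleton_singleton)
  have h := kappa_le_of_sep hsep
  have hc := Set.ncard_add_ncard_compl ({v} : Set V)
  rw [Nat.card_eq_fintype_card] at hc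
  have h1 : ({v} : Set V).ncard = 1 := Set.ncard_singleton v
  omega

/-- Main connectivity lemma: if `|S| < 2κ(G)` and `|S| < b(G)` then `G × K₂ − S`
is connected. -/
lemma main_conn [Fintype V] (G : SimpleGraph V) (S : Set (V × Bool))
    (h2k : S.ncard < 2 * kappa G) (hb : S.ncard < bInv G) :
    ((timesK2 G).induce Sᶜ).Connected := by
  classical
  have hVne : Nonempty V := by
    by_contra h
    have hsep : IsSeparating G ∅ :=
      Or.inr (fun a _ b _ => (h ⟨a⟩).elim)
    have := kappa_le_of_sep hsep
    rw [Set.ncard_empty] at this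
    omega
  have hkcard : kappa G ≤ Fintype.card V - 1 := kappa_le_card_sub_one G hVne.some
  have hVpos : 1 ≤ Fintype.card V := Fintype.card_pos_iff.mpr hVne
  have hcards : S.ncard + Sᶜ.ncard = Fintype.card V * 2 := by
    have := Set.ncard_add_ncard_compl S
    rwa [Nat.card_eq_fintype_card, Fintype.card_prod, Fintype.card_bool] at this
  have hSc : Sᶜ.Nonempty := Set.nonempty_of_ncard_ne_zero (by omega)
  haveI hne : Nonempty ↥(Sᶜ) := hSc.to_subtype
  refine ⟨?_⟩
  intro p q
  by_contra hnr
  have hnAR : ¬ ARel G S p.val q.val := by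
    intro h
    apply hnr
    refine (induce_reachable_iff (timesK2 G) Sᶜ p q).mpr ?_
    exact Relation.ReflTransGen.mono (p := fun x y => (timesK2 G).Adj x y ∧ x ∈ Sᶜ ∧ y ∈ Sᶜ)
      (fun a b hab => ⟨hab.1, hab.2.1, hab.2.2⟩) _ _ h
  by_cases hsplitEx : ∃ u, ((u, false) ∉ S ∧ (u, true) ∉ S) ∧ ¬ ARel G S (u, false) (u, true)
  · obtain ⟨u₀, ⟨hf, ht⟩, hs⟩ := hsplitEx
    obtain ⟨X, Y, hpair, hXZ, hYe⟩ := lemB G S u₀ hf ht hs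
    have h1 := bInv_le_of_pair hpair
    have h2 : X.ncard ≤ (Zset S).ncard := Set.ncard_le_ncard hXZ (Set.toFinite _)
    have := count_lemma S
    rw [hYe] at h1
    omega
  · push_neg at hsplitEx
    have hfib : ∀ u, (u, false) ∉ S → (u, true) ∉ S → ARel G S (u, false) (u, true) :=
      fun u h1 h2 => hsplitEx u ⟨h1, h2⟩
    have noFullCase : ∀ r : V × Bool, r ∉ S →
        (¬ ∃ u, ((u, false) ∉ S ∧ (u, true) ∉ S) ∧ ARel G S r (u, false)) →
        False := by
      rintro ⟨r1, r2⟩ hr hnofull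
      have hu₀Y : r1 ∉ Yset S := by
        intro h
        cases r2
        · exact hr h.1
        · exact hr h.2
      have hnb : ∀ w, G.Adj r1 w → ((w, false) ∈ S ∨ (w, true) ∈ S) := by
        intro w hadj
        by_contra hcon
        push_neg at hcon
        have hwfull := hfib w hcon.1 hcon.2
        apply hnofull
        refine ⟨w, ⟨hcon.1, hcon.2⟩, ?_⟩
        cases r2
        · exact (ARel.single (aAdj_mk hadj (by simp) hr hcon.2)).trans hwfull.symm
        · exact ARel.single (aAdj_mk hadj (by simp) hr hcon.1)
      obtain ⟨X, Y, hpair, hXZ, hYe⟩ := lemC G S r1 hu₀Y hnb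
      have h1 := bInv_le_of_pair hpair
      have h2 : X.ncard ≤ (Zset S).ncard := Set.ncard_le_ncard hXZ (Set.toFinite _)
      have := count_lemma S
      rw [hYe] at h1
      omega
    by_cases hp : ∃ u, ((u, false) ∉ S ∧ (u, true) ∉ S) ∧ ARel G S p.val (u, false)
    · by_cases hq : ∃ u, ((u, false) ∉ S ∧ (u, true) ∉ S) ∧ ARel G S q.val (u, false)
      · obtain ⟨u₀, ⟨huf, hut⟩, hpu⟩ := hp
        obtain ⟨w₀, ⟨hwf, hwt⟩, hqw⟩ := hq
        have hsep : ¬ ARel G S (u₀, false) (w₀, false) := by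
          intro h
          exact hnAR (hpu.trans (h.trans hqw.symm))
        have := lemA G S u₀ w₀ huf hut hwf hwt (hfib u₀ huf hut) (hfib w₀ hwf hwt) hsep
        omega
      · exact noFullCase q.val q.2 hq
    · exact noFullCase p.val p.2 hp

end Main

/-- If `G` is connected and non-bipartite and `|S| < min{2κ(G), b(G)}`, then
`G × K₂ − S` is connected; consequently `κ(G × K₂) ≥ min{2κ(G), b(G)}`. -/
theorem stmt_14 {V : Type u} [Fintype V] (G : SimpleGraph V)
    (hconn : G.Connected) (hnbip : ¬ G.Colorable 2) :
    (∀ S : Set (V × Bool), S.ncard < min (2 * kappa G) (bInv G) →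
      ((timesK2 G).induce Sᶜ).Connected) ∧
    min (2 * kappa G) (bInv G) ≤ kappa (timesK2 G) := by
  classical
  have part1 : ∀ S : Set (V × Bool), S.ncard < min (2 * kappa G) (bInv G) →
      ((timesK2 G).induce Sᶜ).Connected := by
    intro S hS
    exact main_conn G S (lt_of_lt_of_le hS (min_le_left _ _))
      (lt_of_lt_of_le hS (min_le_right _ _))
  refine ⟨part1, ?_⟩
  have hneset : {n | ∃ T : Set (V × Bool), IsSeparating (timesK2 G) T ∧ n = T.ncard}.Nonempty :=
    ⟨(Set.univ : Set (V × Bool)).ncard, Set.univ, Or.inr (by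
      rw [Set.compl_univ]; exact Set.subsingleton_empty), rfl⟩
  rw [kappa]
  refine le_csInf hneset ?_
  rintro n ⟨T, hTsep, rfl⟩
  by_contra hlt
  push_neg at hlt
  have hconn2 := part1 T hlt
  rcases hTsep with hdis | hsub
  · exact hdis hconn2
  · have hk1 : kappa G ≤ Fintype.card V - 1 :=
      kappa_le_card_sub_one G hconn.nonempty.some
    have hcards := Set.ncard_add_ncard_compl T
    rw [Nat.card_eq_fintype_card, Fintype.card_prod, Fintype.card_bool] at hcards
    have hc1 : Tᶜ.ncard ≤ 1 :=
      (Set.ncard_le_one_iff (Set.toFinite _)).mpr fun ha hb => hsub ha hb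
    have hVpos : 1 ≤ Fintype.card V := Fintype.card_pos_iff.mpr hconn.nonempty
    have hmin : T.ncard < 2 * kappa G := lt_of_lt_of_le hlt (min_le_left _ _)
    omega
end

section
/- Let (X, Y) be a b-pair of G witnessed by a bipartite component C of G − (X ∪ Y) with bipartition (P, Q). Define S' = {(x, b) : x ∈ X has a neighbor in P} ∪ {(x, a) : x ∈ X has no neighbor in P} and S'' = Y × {a, b}. Then the component C₁ of C × K₂ with bipartition (P × {a}, Q × {b}) is a connected component of G × K₂ − (S' ∪ S''); in particular, S' ∪ S'' is a separating set of G × K₂ of size |X| + 2|Y| provided G × K₂ − (S' ∪ S'') has another vertex. -/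
open SimpleGraph

universe u v

private lemma reach_mem' {α : Type*} {H : SimpleGraph α} {A : Set α}
    (hA : ∀ u v, u ∈ A → H.Adj u v → v ∈ A) :
    ∀ {u v : α}, H.Reachable u v → u ∈ A → v ∈ A := by
  intro u v h
  obtain ⟨w⟩ := h
  induction w with
  | nil => exact fun h => h
  | cons h p ih => exact fun hu => ih (hA _ _ hu h)

private lemma fin2a : ∀ a b c : Fin 2, a ≠ b → b ≠ c → a = c := by decide
private lemma fin2b : ∀ a b c : Fin 2, a ≠ b → a ≠ c → b ≠ c → False := by decide

/-- Let `(X, Y)` be a b-pair of `G` witnessed by a bipartite component `C = P ∪ Q` of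
`G − (X ∪ Y)`.  With `S' = {(x,b) : x ∈ X has a neighbor in P} ∪ {(x,a) : x ∈ X has no
neighbor in P}` and `S'' = Y × {a,b}`, the component `C₁` of `C × K₂` with bipartition
`(P × {a}, Q × {b})` is a connected component of `G × K₂ − (S' ∪ S'')`; in particular,
if `G × K₂ − (S' ∪ S'')` has another vertex, then `S' ∪ S''` is a separating set of
`G × K₂` of size `|X| + 2|Y|`.  (Here `a = false`, `b = true`.) -/
theorem stmt_19 {V : Type u} [Fintype V] (G : SimpleGraph V) (X Y P Q : Set V)
    (hXY : Disjoint X Y) (hPQ : Disjoint P Q)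
    (hcomp : IsCompOf G ((X ∪ Y)ᶜ) (P ∪ Q))
    (hbip : ∀ u w, u ∈ P ∪ Q → w ∈ P ∪ Q → G.Adj u w →
      (u ∈ P ∧ w ∈ Q) ∨ (u ∈ Q ∧ w ∈ P))
    (hX : ∀ x ∈ X, (G.induce ((P ∪ Q) ∪ {x})).Colorable 2) :
    IsComp ((timesK2 G).induce
        ((((X ∩ {x | ∃ p ∈ P, G.Adj x p}) ×ˢ {true})
          ∪ ((X ∩ {x | ¬ ∃ p ∈ P, G.Adj x p}) ×ˢ {false})
          ∪ (Y ×ˢ (Set.univ : Set Bool)))ᶜ))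
      (Subtype.val ⁻¹' ((P ×ˢ {false}) ∪ (Q ×ˢ {true}))) ∧
    ((∃ p : V × Bool,
        p ∉ ((X ∩ {x | ∃ p ∈ P, G.Adj x p}) ×ˢ {true})
          ∪ ((X ∩ {x | ¬ ∃ p ∈ P, G.Adj x p}) ×ˢ {false})
          ∪ (Y ×ˢ (Set.univ : Set Bool)) ∧
        p ∉ (P ×ˢ {false}) ∪ (Q ×ˢ {true})) →
      IsSeparating (timesK2 G)
        (((X ∩ {x | ∃ p ∈ P, G.Adj x p}) ×ˢ {true})
          ∪ ((X ∩ {x | ¬ ∃ p ∈ P, G.Adj x p}) ×ˢ {false})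
          ∪ (Y ×ˢ (Set.univ : Set Bool))) ∧
      (((X ∩ {x | ∃ p ∈ P, G.Adj x p}) ×ˢ ({true} : Set Bool))
          ∪ ((X ∩ {x | ¬ ∃ p ∈ P, G.Adj x p}) ×ˢ {false})
          ∪ (Y ×ˢ (Set.univ : Set Bool))).ncard = X.ncard + 2 * Y.ncard) := by
  classical
  obtain ⟨K, hK⟩ := hcomp
  set C : Set V := P ∪ Q with hC
  set S : Set (V × Bool) :=
    ((X ∩ {x | ∃ p ∈ P, G.Adj x p}) ×ˢ {true})
      ∪ ((X ∩ {x | ¬ ∃ p ∈ P, G.Adj x p}) ×ˢ {false})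
      ∪ (Y ×ˢ (Set.univ : Set Bool)) with hSdef
  set Cb : Set (V × Bool) := (P ×ˢ {false}) ∪ (Q ×ˢ {true}) with hCbdef
  -- basic facts
  have hCsub : C ⊆ (X ∪ Y)ᶜ := by
    rw [hK]; rintro _ ⟨w, _, rfl⟩; exact w.2
  have hmemK : ∀ (u : V) (hu : u ∈ (X ∪ Y)ᶜ),
      u ∈ C ↔ (⟨u, hu⟩ : ↑((X ∪ Y)ᶜ)) ∈ K.supp := by
    intro u hu
    rw [hK]
    constructor
    · rintro ⟨w, hw, hwu⟩
      have : (⟨u, hu⟩ : ↑((X ∪ Y)ᶜ)) = w := Subtype.ext hwu.symm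
      rw [this]; exact hw
    · intro h; exact ⟨_, h, rfl⟩
  have hclosed : ∀ u v, u ∈ C → G.Adj u v → v ∈ (X ∪ Y)ᶜ → v ∈ C := by
    intro u v hu hadj hv
    have hu' := hCsub hu
    rw [hmemK v hv]
    rw [hmemK u hu'] at hu
    have hadj' : (G.induce ((X ∪ Y)ᶜ)).Adj ⟨u, hu'⟩ ⟨v, hv⟩ := hadj
    rw [ConnectedComponent.mem_supp_iff] at hu ⊢
    exact (ConnectedComponent.sound hadj'.symm.reachable).trans hu
  have hreach : ∀ u v (hu : u ∈ C) (hv : v ∈ C),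
      (G.induce ((X ∪ Y)ᶜ)).Reachable ⟨u, hCsub hu⟩ ⟨v, hCsub hv⟩ := by
    intro u v hu hv
    have h1 := (hmemK u (hCsub hu)).mp hu
    have h2 := (hmemK v (hCsub hv)).mp hv
    rw [ConnectedComponent.mem_supp_iff] at h1 h2
    exact ConnectedComponent.exact (h1.trans h2.symm)
  have hbip' : ∀ u w, u ∈ C → w ∈ C → G.Adj u w → (u ∈ P ↔ w ∉ P) := by
    intro u w hu hw hadj
    rcases hbip u w hu hw hadj with ⟨h1, h2⟩ | ⟨h1, h2⟩
    · exact ⟨fun _ => fun hwP => hPQ.ne_of_mem hwP h2 rfl, fun _ => h1⟩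
    · constructor
      · intro huP; exact absurd rfl (hPQ.ne_of_mem huP h1)
      · intro hwn; exact absurd h2 hwn
  -- the hard lemma
  have L : ∀ x ∈ X, ∀ p ∈ P, ∀ q ∈ Q, G.Adj x p → G.Adj x q → False := by
    intro x hx p hp q hq hxp hxq
    obtain ⟨c⟩ := hX x hx
    set f : V → Fin 2 := fun u => if h : u ∈ C ∪ {x} then c ⟨u, h⟩ else 0 with hf
    have hfadj : ∀ u v, u ∈ C ∪ {x} → v ∈ C ∪ {x} → G.Adj u v → f u ≠ f v := by
      intro u v hu hv h
      simp only [hf, dif_pos hu, dif_pos hv]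
      exact c.valid (by exact h)
    have claim : ∀ (a b : ↑((X ∪ Y)ᶜ)), (G.induce ((X ∪ Y)ᶜ)).Reachable a b →
        a.val ∈ C → b.val ∈ C ∧ (f a.val = f b.val ↔ (a.val ∈ P ↔ b.val ∈ P)) := by
      intro a b h
      obtain ⟨w⟩ := h
      induction w with
      | nil => exact fun ha => ⟨ha, by tauto⟩
      | @cons a b' b hadj w ih =>
        intro ha
        have hadjG : G.Adj a.val b'.val := hadj
        have hb' : b'.val ∈ C := hclosed _ _ ha hadjG b'.2
        obtain ⟨hb, hiff⟩ := ih hb'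
        refine ⟨hb, ?_⟩
        have h1 : f a.val ≠ f b'.val := hfadj _ _ (Or.inl ha) (Or.inl hb') hadjG
        have h2 : a.val ∈ P ↔ b'.val ∉ P := hbip' _ _ ha hb' hadjG
        constructor
        · intro he
          have h3 : f b'.val ≠ f b.val := fun hh => h1 (he.trans hh.symm)
          have h4 : ¬ (b'.val ∈ P ↔ b.val ∈ P) := fun hh => h3 (hiff.mpr hh)
          tauto
        · intro hp
          have h4 : ¬ (b'.val ∈ P ↔ b.val ∈ P) := by tauto
          have h3 : f b'.val ≠ f b.val := fun hh => h4 (hiff.mp hh)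
          exact fin2a _ _ _ h1 h3
    have hpC : p ∈ C := Or.inl hp
    have hqC : q ∈ C := Or.inr hq
    have hpq := (claim _ _ (hreach p q hpC hqC) hpC).2
    have hqnP : q ∉ P := fun h => hPQ.ne_of_mem h hq rfl
    have hfpq : f p ≠ f q := by
      intro h
      have := hpq.mp h
      exact hqnP (this.mp hp)
    have h1 : f x ≠ f p := hfadj x p (Or.inr rfl) (Or.inl hpC) hxp
    have h2 : f x ≠ f q := hfadj x q (Or.inr rfl) (Or.inl hqC) hxq
    exact fin2b (f x) (f p) (f q) h1 h2 hfpq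
  -- membership in S
  have hSmem : ∀ (w : V) (β : Bool), (w, β) ∈ S ↔
      (w ∈ Y ∨ (w ∈ X ∧ ((∃ p ∈ P, G.Adj w p) ↔ β = true))) := by
    intro w β
    rw [hSdef]
    simp only [Set.mem_union, Set.mem_prod, Set.mem_inter_iff, Set.mem_setOf_eq,
      Set.mem_singleton_iff, Set.mem_univ, and_true]
    constructor
    · rintro ((⟨⟨hw, he⟩, hβ⟩ | ⟨⟨hw, he⟩, hβ⟩) | hw)
      · exact Or.inr ⟨hw, by simp [hβ, he]⟩
      · exact Or.inr ⟨hw, by simp [hβ, he]⟩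
      · exact Or.inl hw
    · rintro (hw | ⟨hw, he⟩)
      · exact Or.inr hw
      · cases β
        · exact Or.inl (Or.inr ⟨⟨hw, by simpa using he⟩, rfl⟩)
        · exact Or.inl (Or.inl ⟨⟨hw, he.mpr rfl⟩, rfl⟩)
  have hTnotXY : ∀ (w : V) (β : Bool), w ∉ X ∪ Y → (w, β) ∉ S := by
    intro w β hw hmem
    rcases (hSmem w β).mp hmem with h | h
    · exact hw (Or.inr h)
    · exact hw (Or.inl h.1)
  have hCbmem : ∀ (w : V) (β : Bool), (w, β) ∈ Cb ↔ ((w ∈ P ∧ β = false) ∨ (w ∈ Q ∧ β = true)) := by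
    intro w β
    rw [hCbdef]
    simp only [Set.mem_union, Set.mem_prod, Set.mem_singleton_iff]
  have hCbT : Cb ⊆ Sᶜ := by
    rintro ⟨w, β⟩ hw
    have hwC : w ∈ C := by
      rcases (hCbmem w β).mp hw with ⟨h, _⟩ | ⟨h, _⟩
      exacts [Or.inl h, Or.inr h]
    exact hTnotXY w β (hCsub hwC)
  -- closure of Cb under adjacency in the deleted graph
  have hDcl : ∀ z w : V × Bool, z ∈ Cb → w ∈ Sᶜ → (timesK2 G).Adj z w → w ∈ Cb := by
    rintro ⟨u, β⟩ ⟨v, γ⟩ hz hw hadj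
    obtain ⟨hG, hne⟩ := hadj
    have hne' : β ≠ γ := by simpa using hne
    have huC : u ∈ C := by
      rcases (hCbmem u β).mp hz with ⟨h, _⟩ | ⟨h, _⟩
      exacts [Or.inl h, Or.inr h]
    by_cases hv1 : v ∈ X ∪ Y
    · exfalso
      apply hw
      rcases hv1 with hvX | hvY
      · rcases (hCbmem u β).mp hz with ⟨hP, hβ⟩ | ⟨hQ, hβ⟩
        · subst hβ
          have hγ : γ = true := by
            cases γ
            · exact absurd rfl hne'
            · rfl
          subst hγ
          exact (hSmem v true).mpr (Or.inr ⟨hvX, by simp only [iff_true]; exact ⟨u, hP, hG.symm⟩⟩)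
        · subst hβ
          have hγ : γ = false := by
            cases γ
            · rfl
            · exact absurd rfl hne'
          subst hγ
          refine (hSmem v false).mpr (Or.inr ⟨hvX, ?_⟩)
          constructor
          · rintro ⟨p, hp, hvp⟩
            exact (L v hvX p hp u hQ hvp hG.symm).elim
          · intro h
            exact absurd h (by simp)
      · exact (hSmem v γ).mpr (Or.inl hvY)
    · have hvC : v ∈ C := hclosed u v huC hG hv1
      rcases (hCbmem u β).mp hz with ⟨hP, hβ⟩ | ⟨hQ, hβ⟩
      · have hvQ : v ∈ Q := by
          rcases hbip u v huC hvC hG with ⟨_, h⟩ | ⟨h, _⟩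
          · exact h
          · exact absurd rfl (hPQ.ne_of_mem hP h)
        subst hβ
        have hγ : γ = true := by
          cases γ
          · exact absurd rfl hne'
          · rfl
        exact (hCbmem v γ).mpr (Or.inr ⟨hvQ, hγ⟩)
      · have hvP : v ∈ P := by
          rcases hbip u v huC hvC hG with ⟨h, _⟩ | ⟨_, h⟩
          · exact absurd rfl (hPQ.ne_of_mem h hQ)
          · exact h
        subst hβ
        have hγ : γ = false := by
          cases γ
          · rfl
          · exact absurd rfl hne'
        exact (hCbmem v γ).mpr (Or.inl ⟨hvP, hγ⟩)
  have hDclosed : ∀ (p q : ↑(Sᶜ)), p ∈ Subtype.val ⁻¹' Cb →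
      ((timesK2 G).induce Sᶜ).Adj p q → q ∈ Subtype.val ⁻¹' Cb := by
    intro p q hp hadj
    exact hDcl p.val q.val hp q.2 hadj
  -- lifting reachability
  have claim2 : ∀ (a b : ↑((X ∪ Y)ᶜ)), (G.induce ((X ∪ Y)ᶜ)).Reachable a b →
      ∀ (β γ : Bool) (hβ : (a.val, β) ∈ Cb) (hγ : (b.val, γ) ∈ Cb),
      ((timesK2 G).induce Sᶜ).Reachable ⟨(a.val, β), hCbT hβ⟩ ⟨(b.val, γ), hCbT hγ⟩ := by
    intro a b h
    obtain ⟨w⟩ := h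
    induction w with
    | nil =>
      intro β γ hβ hγ
      have hbg : β = γ := by
        rcases (hCbmem _ β).mp hβ with ⟨h1, e1⟩ | ⟨h1, e1⟩ <;>
          rcases (hCbmem _ γ).mp hγ with ⟨h2, e2⟩ | ⟨h2, e2⟩
        · exact e1.trans e2.symm
        · exact absurd rfl (hPQ.ne_of_mem h1 h2)
        · exact absurd rfl (hPQ.ne_of_mem h2 h1)
        · exact e1.trans e2.symm
      subst hbg
      exact Reachable.refl _
    | @cons a b' b hadj w ih =>
      intro β γ hβ hγ
      have hadjG : G.Adj a.val b'.val := hadj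
      have haC : a.val ∈ C := by
        rcases (hCbmem _ β).mp hβ with ⟨h1, _⟩ | ⟨h1, _⟩
        exacts [Or.inl h1, Or.inr h1]
      have hb'C : b'.val ∈ C := hclosed _ _ haC hadjG b'.2
      have hβ' : (b'.val, !β) ∈ Cb := by
        rcases (hCbmem _ β).mp hβ with ⟨h1, e1⟩ | ⟨h1, e1⟩
        · subst e1
          refine (hCbmem _ _).mpr (Or.inr ⟨?_, rfl⟩)
          rcases hbip _ _ haC hb'C hadjG with ⟨_, h⟩ | ⟨h, _⟩
          · exact h
          · exact absurd rfl (hPQ.ne_of_mem h1 h)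
        · subst e1
          refine (hCbmem _ _).mpr (Or.inl ⟨?_, rfl⟩)
          rcases hbip _ _ haC hb'C hadjG with ⟨h, _⟩ | ⟨_, h⟩
          · exact absurd rfl (hPQ.ne_of_mem h h1)
          · exact h
      have hstep : ((timesK2 G).induce Sᶜ).Adj ⟨(a.val, β), hCbT hβ⟩ ⟨(b'.val, !β), hCbT hβ'⟩ := by
        refine ⟨hadjG, ?_⟩
        show (⊤ : SimpleGraph Bool).Adj β (!β)
        simp
      exact hstep.reachable.trans (ih (!β) γ hβ' hγ)
  -- base point
  obtain ⟨z, hz⟩ := K.exists_rep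
  have hzC : z.val ∈ C := by
    rw [hK]
    exact ⟨z, by rw [ConnectedComponent.mem_supp_iff]; exact hz, rfl⟩
  obtain ⟨β₀, hz0⟩ : ∃ β : Bool, (z.val, β) ∈ Cb := by
    rcases hzC with h | h
    · exact ⟨false, (hCbmem _ _).mpr (Or.inl ⟨h, rfl⟩)⟩
    · exact ⟨true, (hCbmem _ _).mpr (Or.inr ⟨h, rfl⟩)⟩
  constructor
  · refine ⟨((timesK2 G).induce Sᶜ).connectedComponentMk ⟨(z.val, β₀), hCbT hz0⟩, ?_⟩
    ext p
    rcases p with ⟨⟨u, β⟩, hpT⟩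
    simp only [Set.mem_preimage, ConnectedComponent.mem_supp_iff]
    constructor
    · intro hp
      have huC : u ∈ C := by
        rcases (hCbmem u β).mp hp with ⟨h, _⟩ | ⟨h, _⟩
        exacts [Or.inl h, Or.inr h]
      apply ConnectedComponent.sound
      exact claim2 ⟨u, hCsub huC⟩ ⟨z.val, hCsub hzC⟩ (hreach u z.val huC hzC) β β₀ hp hz0
    · intro hp
      have hr : ((timesK2 G).induce Sᶜ).Reachable ⟨(z.val, β₀), hCbT hz0⟩ ⟨(u, β), hpT⟩ :=
        (ConnectedComponent.exact hp).symm
      exact reach_mem' hDclosed hr hz0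
  · rintro ⟨⟨v, γ⟩, hvS, hvCb⟩
    constructor
    · left
      intro hconn
      have hr := hconn.preconnected ⟨(z.val, β₀), hCbT hz0⟩ ⟨(v, γ), hvS⟩
      exact hvCb (reach_mem' hDclosed hr hz0)
    · have prodcard : ∀ (s : Set V) (b : Bool), (s ×ˢ ({b} : Set Bool)).ncard = s.ncard := by
        intro s b
        have himg : s ×ˢ ({b} : Set Bool) = (fun w => (w, b)) '' s := by
          ext ⟨w, β⟩
          constructor
          · rintro ⟨hw, hβ⟩
            have hβ' : β = b := hβ
            subst hβ'
            exact ⟨w, hw, rfl⟩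
          · rintro ⟨x, hx, he⟩
            cases he
            exact ⟨hx, rfl⟩
        rw [himg, Set.ncard_image_of_injective _ (fun x y h => congrArg Prod.fst h)]
      have hYcard : (Y ×ˢ (Set.univ : Set Bool)).ncard = 2 * Y.ncard := by
        have hsplit : Y ×ˢ (Set.univ : Set Bool) =
            Y ×ˢ ({true} : Set Bool) ∪ Y ×ˢ ({false} : Set Bool) := by
          ext ⟨w, β⟩
          cases β <;> simp
        have hdj : Disjoint (Y ×ˢ ({true} : Set Bool)) (Y ×ˢ ({false} : Set Bool)) := by
          rw [Set.disjoint_left]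
          rintro ⟨w, β⟩ ⟨_, h1⟩ ⟨_, h2⟩
          have e1 : β = true := h1
          have e2 : β = false := h2
          rw [e1] at e2
          exact Bool.noConfusion e2
        rw [hsplit, Set.ncard_union_eq hdj, prodcard, prodcard]
        ring
      have d12 : Disjoint ((X ∩ {x | ∃ p ∈ P, G.Adj x p}) ×ˢ ({true} : Set Bool))
          ((X ∩ {x | ¬ ∃ p ∈ P, G.Adj x p}) ×ˢ ({false} : Set Bool)) := by
        rw [Set.disjoint_left]
        rintro ⟨w, β⟩ ⟨⟨_, h1⟩, _⟩ ⟨⟨_, h2⟩, _⟩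
        exact h2 h1
      have d3 : Disjoint (((X ∩ {x | ∃ p ∈ P, G.Adj x p}) ×ˢ ({true} : Set Bool))
            ∪ ((X ∩ {x | ¬ ∃ p ∈ P, G.Adj x p}) ×ˢ ({false} : Set Bool)))
          (Y ×ˢ (Set.univ : Set Bool)) := by
        rw [Set.disjoint_left]
        rintro ⟨w, β⟩ h1 ⟨hY, _⟩
        have hwX : w ∈ X := by
          rcases h1 with ⟨⟨h, _⟩, _⟩ | ⟨⟨h, _⟩, _⟩ <;> exact h
        exact hXY.ne_of_mem hwX hY rfl
      show S.ncard = X.ncard + 2 * Y.ncard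
      rw [hSdef, Set.ncard_union_eq d3, Set.ncard_union_eq d12, prodcard, prodcard, hYcard]
      have hXsplit : (X ∩ {x | ∃ p ∈ P, G.Adj x p}).ncard
          + (X ∩ {x | ¬ ∃ p ∈ P, G.Adj x p}).ncard = X.ncard := by
        have hd : X ∩ {x | ¬ ∃ p ∈ P, G.Adj x p} = X \ {x | ∃ p ∈ P, G.Adj x p} := by
          ext w
          simp [Set.mem_diff]
        rw [hd]
        exact Set.ncard_inter_add_ncard_diff_eq_ncard X _ (Set.toFinite X)
      omega
end
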